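/- For every integer d ≥ 1 and every k ∈ {1,…,d}, the entropy flux q_k is compatible with the entropy η in the sense of conservation laws: for every (p,u) with p > 0, u ∈ ℝ^d, the total (Fréchet) derivative of the map (p,u) ↦ q_k(p,u) at (p,u) equals Σ_{α=1}^{d+1} ω_α(p,u) times the total derivative of the map (p,u) ↦ F_k^{(α)}(p,u) at (p,u). (This is the chain-rule form, in primitive variables, of the compatibility relation ∇_w q_k^T = ∇_w η^T · D_w F_k.) -/

import Mathlib

open Real Finset

/-- Exact fluxes `F_k` of the ultra-relativistic Euler equations. -/
noncomputable def flux (d : ℕ) (k : Fin d) (p : ℝ) (u : Fin d → ℝ) : Fin (d + 1) → ℝ :=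
  Fin.snoc (fun i => p * (if i = k then 1 else 0) + 4 * p * u i * u k)
    (4 * p * u k * Real.sqrt (1 + ∑ j, u j ^ 2))

/-- Entropy variables (main field) of the ultra-relativistic Euler equations. -/
noncomputable def entropyVars (d : ℕ) (p : ℝ) (u : Fin d → ℝ) : Fin (d + 1) → ℝ :=
  Fin.snoc (fun i => -(1 / 4) * u i * p ^ (-(1 / 4) : ℝ))
    ((1 / 4) * p ^ (-(1 / 4) : ℝ) * Real.sqrt (1 + ∑ j, u j ^ 2))

/-- Entropy fluxes `q_k(p,u) = p^{3/4} u_k`. -/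
noncomputable def entropyFlux (d : ℕ) (k : Fin d) (p : ℝ) (u : Fin d → ℝ) : ℝ :=
  p ^ ((3 : ℝ) / 4) * u k

set_option maxHeartbeats 1000000 in
/-- Compatibility of the entropy flux with the entropy, in chain-rule form with
respect to the primitive variables `(p,u)`:
`D q_k = Σ_α ω_α D F_k^{(α)}` at every state with `p > 0`. -/
theorem entropyFlux_compatible (d : ℕ) (hd : 1 ≤ d) (k : Fin d)
    (p : ℝ) (hp : 0 < p) (u : Fin d → ℝ) :
    fderiv ℝ (fun x : ℝ × (Fin d → ℝ) => entropyFlux d k x.1 x.2) (p, u) =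
      ∑ α : Fin (d + 1), entropyVars d p u α •
        fderiv ℝ (fun x : ℝ × (Fin d → ℝ) => flux d k x.1 x.2 α) (p, u) := by
  have hS0 : (0:ℝ) ≤ ∑ j, u j ^ 2 := Finset.sum_nonneg fun j _ => sq_nonneg _
  have hP : HasFDerivAt (fun x : ℝ × (Fin d → ℝ) => x.1)
      (ContinuousLinearMap.fst ℝ ℝ (Fin d → ℝ)) (p, u) := hasFDerivAt_fst
  have hU : ∀ i, HasFDerivAt (fun x : ℝ × (Fin d → ℝ) => x.2 i)
      ((ContinuousLinearMap.proj i).comp (ContinuousLinearMap.snd ℝ ℝ (Fin d → ℝ))) (p, u) :=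
    fun i => ((ContinuousLinearMap.proj i).comp (ContinuousLinearMap.snd ℝ ℝ (Fin d → ℝ))).hasFDerivAt
  -- q
  have hq := ((Real.hasDerivAt_rpow_const (x := p) (p := (3:ℝ)/4)
      (Or.inl hp.ne')).comp_hasFDerivAt (p, u) hP).fun_mul (hU k)
  simp only [Function.comp] at hq
  -- F_i
  have hFi := fun i : Fin d =>
    (hP.mul_const (if i = k then (1:ℝ) else 0)).fun_add
      (((hP.const_mul 4).fun_mul (hU i)).fun_mul (hU k))
  -- sqrt part
  have hS : HasFDerivAt (fun x : ℝ × (Fin d → ℝ) => (1:ℝ) + ∑ j, x.2 j ^ 2)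
      (0 + ∑ j, (u j • ((ContinuousLinearMap.proj j).comp (ContinuousLinearMap.snd ℝ ℝ (Fin d → ℝ))) +
        u j • ((ContinuousLinearMap.proj j).comp (ContinuousLinearMap.snd ℝ ℝ (Fin d → ℝ))))) (p, u) :=
    (hasFDerivAt_const (1:ℝ) _).fun_add (HasFDerivAt.fun_sum fun j _ => by
      simpa only [pow_two] using (hU j).fun_mul (hU j))
  have hFd := ((hP.const_mul 4).fun_mul (hU k)).fun_mul
    ((Real.hasDerivAt_sqrt (x := 1 + ∑ j, u j ^ 2) (by positivity)).comp_hasFDerivAt (p, u) hS)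
  simp only [Function.comp] at hFd
  -- rewrite the goal
  rw [Fin.sum_univ_castSucc]
  simp only [entropyFlux, flux, entropyVars, Fin.snoc_castSucc, Fin.snoc_last]
  rw [hq.fderiv, hFd.fderiv]
  have eFi := fun i : Fin d => (hFi i).fderiv
  simp only [eFi]
  refine ContinuousLinearMap.ext fun v => ?_
  simp only [ContinuousLinearMap.add_apply, ContinuousLinearMap.smul_apply,
    ContinuousLinearMap.sum_apply, ContinuousLinearMap.comp_apply,
    ContinuousLinearMap.coe_fst', ContinuousLinearMap.coe_snd',
    ContinuousLinearMap.proj_apply, ContinuousLinearMap.zero_apply,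
    smul_eq_mul]
  have e34 : (3:ℝ)/4 - 1 = -(1/4) := by norm_num
  rw [e34]
  set A : ℝ := p ^ (-(1/4) : ℝ) with hA
  set r : ℝ := Real.sqrt (1 + ∑ j, u j ^ 2) with hrdef
  have hrpos : 0 < r := Real.sqrt_pos.2 (by positivity)
  have hrr : r * r = 1 + ∑ j, u j ^ 2 := by
    rw [← pow_two]; exact Real.sq_sqrt (by positivity)
  have hpA : A * p = p ^ ((3:ℝ)/4) := by
    have h1 : p ^ (-(1/4):ℝ) * p ^ (1:ℝ) = p ^ ((3:ℝ)/4) := by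
      rw [← Real.rpow_add hp]; norm_num
    rw [hA]; simpa using h1
  have hsum1 : ∑ x : Fin d,
      -(1 / 4) * u x * A *
        ((if x = k then 1 else 0) * v.1 + (4 * p * u x * v.2 k + u k * (4 * p * v.2 x + u x * (4 * v.1)))) =
      -(1/4) * A * u k * v.1 + (-(A * (p * v.2 k + u k * v.1))) * (∑ x, u x ^ 2) +
        (-(A * p * u k)) * (∑ x, u x * v.2 x) := by
    have hterm : ∀ x : Fin d,
        -(1 / 4) * u x * A *
          ((if x = k then 1 else 0) * v.1 + (4 * p * u x * v.2 k + u k * (4 * p * v.2 x + u x * (4 * v.1)))) =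
        (if x = k then -(1/4) * A * u k * v.1 else 0) +
          ((-(A * (p * v.2 k + u k * v.1))) * u x ^ 2 + (-(A * p * u k)) * (u x * v.2 x)) := by
      intro x
      split_ifs with h
      · rw [h]; ring
      · ring
    rw [Finset.sum_congr rfl fun x _ => hterm x]
    rw [Finset.sum_add_distrib, Finset.sum_add_distrib, ← Finset.mul_sum, ← Finset.mul_sum,
      Finset.sum_ite_eq' univ k fun _ => -(1/4) * A * u k * v.1]
    simp [add_assoc]
  rw [hsum1]
  have hsum2 : ∑ x : Fin d, (u x * v.2 x + u x * v.2 x) = 2 * ∑ x, u x * v.2 x := by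
    rw [Finset.sum_add_distrib]; ring
  rw [hsum2, ← hpA]
  set S : ℝ := ∑ x, u x ^ 2
  set T : ℝ := ∑ x, u x * v.2 x
  field_simp
  linear_combination (-8 * A * (p * v.2 k + u k * v.1)) * hrr
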